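/- For every ε > 0, the function ω ↦ Sep(ω,S,ε) is 𝓕-measurable on Ω. -/

import Mathlib

set_option linter.unusedSectionVars false
set_option maxHeartbeats 1000000

open MeasureTheory Filter Set

namespace SepProof

/-! ### The measurable projection theorem

Mathlib (at this version) does not contain the measurable projection theorem, so we prove it
here: for a complete (finite) measure `ℙ` on `Ω` and a Polish space `Z`, the projection to `Ω`
of a measurable subset of `Ω × Z` is measurable.  The proof goes through the universal (null-)
measurability of analytic sets in Polish spaces, and a reduction of an arbitrary set in the
product σ-algebra to a countably generated factor `ℕ → ℕ`. -/

/-- The basic "Souslin scheme" sets. -/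
def S (w : ℕ → ℕ) (k : ℕ) : Set (ℕ → ℕ) := {x | ∀ i < k, x i ≤ w i}

lemma S_zero (w : ℕ → ℕ) : S w 0 = univ := by
  ext x; simp [S]

lemma S_succ (w : ℕ → ℕ) (k : ℕ) :
    S w k = ⋃ j : ℕ, S (Function.update w k j) (k + 1) := by
  ext x
  constructor
  · intro hx
    refine mem_iUnion.2 ⟨x k, fun i hi => ?_⟩
    rcases Nat.lt_succ_iff_lt_or_eq.1 hi with h | h
    · rw [Function.update_of_ne h.ne]; exact hx i h
    · subst h; simp
  · rintro hx i hi
    rcases mem_iUnion.1 hx with ⟨j, hj⟩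
    have := hj i (hi.trans (Nat.lt_succ_self k))
    rwa [Function.update_of_ne hi.ne] at this

lemma S_mono_update (w : ℕ → ℕ) (k : ℕ) :
    Monotone (fun j => S (Function.update w k j) (k + 1)) := by
  intro j j' hjj x hx i hi
  have := hx i hi
  by_cases h : i = k
  · subst h
    simp only [Function.update_self] at this ⊢
    exact this.trans hjj
  · rwa [Function.update_of_ne h] at this ⊢

lemma S_antitone (w : ℕ → ℕ) : Antitone (S w) := by
  intro k k' hk x hx i hi
  exact hx i (hi.trans_le hk)

lemma S_eq_of_agree {w w' : ℕ → ℕ} {k : ℕ} (h : ∀ i < k, w i = w' i) :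
    S w k = S w' k := by
  ext x; constructor <;> intro hx i hi
  · rw [← h i hi]; exact hx i hi
  · rw [h i hi]; exact hx i hi

variable {Y : Type*} [MetricSpace Y] [MeasurableSpace Y] [OpensMeasurableSpace Y]
  (μ : Measure Y) [IsFiniteMeasure μ]

/-- Choice of the bounding sequence. -/
lemma exists_bounding_seq (f : (ℕ → ℕ) → Y) {c : ENNReal} (hc : c < μ (Set.range f)) :
    ∃ m : ℕ → ℕ, ∀ k, c < μ (f '' S m k) := by
  have step : ∀ (k : ℕ) (w : ℕ → ℕ), c < μ (f '' S w k) →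
      ∃ j, c < μ (f '' S (Function.update w k j) (k + 1)) := by
    intro k w hw
    have h1 : μ (f '' S w k) = ⨆ j : ℕ, μ (f '' S (Function.update w k j) (k + 1)) := by
      rw [S_succ w k, Set.image_iUnion]
      exact Directed.measure_iUnion (Monotone.directed_le
        (fun j j' h => Set.image_mono (S_mono_update w k h)))
    rw [h1] at hw
    exact lt_iSup_iff.1 hw
  -- recursive construction
  let V : (k : ℕ) → {w : ℕ → ℕ // c < μ (f '' S w k)} := fun k =>
    Nat.rec ⟨fun _ => 0, by rw [S_zero, Set.image_univ]; exact hc⟩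
      (fun k ih => ⟨Function.update ih.1 k (Classical.choose (step k ih.1 ih.2)),
        Classical.choose_spec (step k ih.1 ih.2)⟩) k
  have hVsucc : ∀ k i, i < k → (V (k+1)).1 i = (V k).1 i := by
    intro k i hi
    show Function.update (V k).1 k _ i = (V k).1 i
    exact Function.update_of_ne hi.ne _ _
  refine ⟨fun i => (V (i+1)).1 i, fun k => ?_⟩
  have hagree : ∀ k i, i < k → (V k).1 i = (V (i+1)).1 i := by
    intro k
    induction k with
    | zero => intro i hi; omega
    | succ k ih =>
      intro i hi
      rcases Nat.lt_succ_iff_lt_or_eq.1 hi with h | h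
      · rw [hVsucc k i h]; exact ih i h
      · subst h; rfl
  rw [S_eq_of_agree (w := fun i => (V (i+1)).1 i) (w' := (V k).1)
    (fun i hi => (hagree k i hi).symm)]
  exact (V k).2

/-- The closure-intersection is inside the image of the compact cube. -/
lemma iInter_closure_subset (f : (ℕ → ℕ) → Y) (hf : Continuous f) (m : ℕ → ℕ) :
    (⋂ k, closure (f '' S m k)) ⊆ f '' {x | ∀ i, x i ≤ m i} := by
  intro y hy
  -- pick approximating points
  have hpt : ∀ k : ℕ, ∃ x ∈ S m k, dist y (f x) < 1 / (k + 1) := by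
    intro k
    have h1 : y ∈ closure (f '' S m k) := by
     have := Set.mem_iInter.1 hy k; exact this
    rcases Metric.mem_closure_iff.1 h1 (1 / (k+1)) (by positivity) with ⟨z, hz, hdz⟩
    rcases hz with ⟨x, hx, rfl⟩
    exact ⟨x, hx, hdz⟩
  choose x hxS hxd using hpt
  -- ultrafilter limit
  let U : Ultrafilter ℕ := Ultrafilter.of Filter.atTop
  have hU : (U : Filter ℕ) ≤ Filter.atTop := Ultrafilter.of_le _
  have hcoord : ∀ i : ℕ, ∃ v ∈ Set.Iic (m i), (U.map (fun k => x k i)) = pure v := by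
    intro i
    have hmem : Set.Iic (m i) ∈ U.map (fun k => x k i) := by
      have : {k : ℕ | x k i ≤ m i} ∈ (Filter.atTop : Filter ℕ) := by
        refine Filter.mem_atTop_sets.2 ⟨i + 1, fun k hk => ?_⟩
        exact hxS k i (by omega)
      exact Filter.mem_map.2 (hU this)
    exact Ultrafilter.eq_pure_of_finite_mem (Set.finite_Iic _) hmem
  choose v hvle hvpure using hcoord
  refine ⟨v, fun i => hvle i, ?_⟩
  -- x k → v along U
  have hxlim : Filter.Tendsto x (U : Filter ℕ) (nhds v) := by
    rw [tendsto_pi_nhds]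
    intro i
    have : Filter.Tendsto (fun k => x k i) (U : Filter ℕ) (pure (v i)) := by
      rw [Filter.Tendsto, ← Ultrafilter.coe_map, hvpure i, Ultrafilter.coe_pure]
    exact this.mono_right (pure_le_nhds _)
  have hflim : Filter.Tendsto (fun k => f (x k)) (U : Filter ℕ) (nhds (f v)) :=
    (hf.tendsto v).comp hxlim
  have hylim : Filter.Tendsto (fun k => f (x k)) (U : Filter ℕ) (nhds y) := by
    have h0 : Filter.Tendsto (fun k : ℕ => dist y (f (x k))) Filter.atTop (nhds 0) := by
      have hb : Filter.Tendsto (fun k : ℕ => 1 / ((k : ℝ) + 1)) Filter.atTop (nhds 0) :=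
        tendsto_one_div_add_atTop_nhds_zero_nat
      refine squeeze_zero (fun k => dist_nonneg) (fun k => (hxd k).le) hb
    have := tendsto_iff_dist_tendsto_zero.2 (by simpa [dist_comm] using h0 :
      Filter.Tendsto (fun k : ℕ => dist (f (x k)) y) Filter.atTop (nhds 0))
    exact this.mono_left hU
  haveI : (U : Filter ℕ).NeBot := U.neBot
  exact tendsto_nhds_unique hflim hylim

/-- Inner compact approximation of analytic (image) sets. -/
lemma exists_compact_subset_of_lt (f : (ℕ → ℕ) → Y) (hf : Continuous f)
    {c : ENNReal} (hc : c < μ (Set.range f)) :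
    ∃ K, IsCompact K ∧ K ⊆ Set.range f ∧ c ≤ μ K := by
  obtain ⟨m, hm⟩ := exists_bounding_seq μ f hc
  set Cube : Set (ℕ → ℕ) := {x | ∀ i, x i ≤ m i} with hCube
  have hCubeC : IsCompact Cube := by
    have : Cube = Set.pi Set.univ (fun i => Set.Iic (m i)) := by
      ext x; simp only [hCube, Set.mem_pi, Set.mem_univ, forall_true_left, Set.mem_Iic, Set.mem_setOf_eq, true_implies]
    rw [this]
    exact isCompact_univ_pi (fun i => (Set.finite_Iic _).isCompact)
  have himg : f '' Cube ⊆ Set.range f := by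
    rintro y ⟨x, _, rfl⟩; exact ⟨x, rfl⟩
  refine ⟨f '' Cube, hCubeC.image hf, himg, ?_⟩
  have hsub : (⋂ k, closure (f '' S m k)) ⊆ f '' Cube := iInter_closure_subset f hf m
  refine le_trans ?_ (measure_mono hsub)
  have : μ (⋂ k, closure (f '' S m k)) = ⨅ k, μ (closure (f '' S m k)) := by
    refine Directed.measure_iInter (fun k => (isClosed_closure.measurableSet).nullMeasurableSet)
      ?_ ⟨0, measure_ne_top μ _⟩
    exact Antitone.directed_ge (fun k k' h => closure_mono (Set.image_mono (S_antitone m h)))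
  rw [this]
  refine le_iInf (fun k => ?_)
  exact le_trans (hm k).le (measure_mono subset_closure)

/-- Analytic sets in a Polish space are null measurable for every finite Borel measure. -/
lemma analyticSet_nullMeasurableSet {Z : Type*} [TopologicalSpace Z] [PolishSpace Z]
    [MeasurableSpace Z] [BorelSpace Z] (ν : Measure Z) [IsFiniteMeasure ν]
    {A : Set Z} (hA : AnalyticSet A) : NullMeasurableSet A ν := by
  rw [AnalyticSet_def] at hA
  rcases hA with rfl | ⟨f, hf, rfl⟩
  · exact MeasurableSet.empty.nullMeasurableSet
  letI := TopologicalSpace.upgradeIsCompletelyMetrizable Z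
  by_cases h0 : ν (Set.range f) = 0
  · exact NullMeasurableSet.of_null h0
  -- compact approximations
  have hK : ∀ n : ℕ, ∃ K, IsCompact K ∧ K ⊆ Set.range f ∧
      ν (Set.range f) - (↑(n+1) : ENNReal)⁻¹ ≤ ν K := by
    intro n
    have hlt : ν (Set.range f) - (↑(n+1) : ENNReal)⁻¹ < ν (Set.range f) :=
      ENNReal.sub_lt_self (measure_ne_top ν _) h0 (by simp)
    exact exists_compact_subset_of_lt ν f hf hlt
  choose K hKc hKsub hKν using hK
  set B : Set Z := ⋃ n, K n with hB
  have hBmeas : MeasurableSet B :=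
    MeasurableSet.iUnion (fun n => ((hKc n).isClosed.measurableSet))
  have hBsub : B ⊆ Set.range f := Set.iUnion_subset hKsub
  have hBν : ν (Set.range f) ≤ ν B := by
    refine ENNReal.le_of_forall_pos_le_add (fun δ hδ hB' => ?_)
    obtain ⟨n, hn⟩ := ENNReal.exists_inv_nat_lt (a := (δ : ENNReal))
      (by exact_mod_cast hδ.ne')
    have h1 : ν (Set.range f) ≤ ν B + (↑(n+1) : ENNReal)⁻¹ := by
      have := hKν n
      have h2 : ν (K n) ≤ ν B := measure_mono (Set.subset_iUnion K n)
      exact tsub_le_iff_right.1 (this.trans h2)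
    refine h1.trans (add_le_add_right ?_ _)
    refine le_of_lt (lt_of_le_of_lt ?_ hn)
    exact ENNReal.inv_le_inv.2 (by exact_mod_cast Nat.le_succ n)
  set t := toMeasurable ν (Set.range f) with ht
  have hsub_t : Set.range f ⊆ t := subset_toMeasurable _ _
  have hdiff : ν (t \ B) = 0 := by
    rw [measure_diff (hBsub.trans hsub_t) hBmeas.nullMeasurableSet (measure_ne_top ν B),
      measure_toMeasurable]
    exact tsub_eq_zero_of_le hBν
  have hae : Set.range f =ᵐ[ν] B := by
    rw [ae_eq_set]
    constructor
    · exact measure_mono_null (Set.diff_subset_diff_left hsub_t) hdiff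
    · rw [Set.diff_eq_empty.2 hBsub]; exact measure_empty
  exact ⟨B, hBmeas, hae⟩

section Reduction

variable {Ω : Type*} [MeasurableSpace Ω] {Z : Type*} [MeasurableSpace Z]

/-- A set in the product σ-algebra factors through a measurable map to `ℕ → ℕ`. -/
def Good (E : Set (Ω × Z)) : Prop :=
  ∃ q : Ω → (ℕ → ℕ), Measurable q ∧ ∃ D : Set ((ℕ → ℕ) × Z), MeasurableSet D ∧
    E = (fun p : Ω × Z => (q p.1, p.2)) ⁻¹' D

lemma good_empty : Good (∅ : Set (Ω × Z)) :=
  ⟨fun _ _ => 0, measurable_const, ∅, MeasurableSet.empty, by simp⟩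

lemma good_compl {E : Set (Ω × Z)} (h : Good E) : Good Eᶜ := by
  obtain ⟨q, hq, D, hD, rfl⟩ := h
  exact ⟨q, hq, Dᶜ, hD.compl, by simp⟩

lemma good_iUnion {E : ℕ → Set (Ω × Z)} (h : ∀ n, Good (E n)) : Good (⋃ n, E n) := by
  choose q hq D hD hED using h
  classical
  refine ⟨fun ω k => q (Nat.unpair k).1 ω (Nat.unpair k).2, ?_, ?_⟩
  · refine measurable_pi_lambda _ (fun k => ?_)
    exact (measurable_pi_apply _).comp (hq _)
  · set r : ℕ → (ℕ → ℕ) → (ℕ → ℕ) := fun n z j => z (Nat.pair n j) with hr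
    have hrm : ∀ n, Measurable (r n) := fun n =>
      measurable_pi_lambda _ (fun j => measurable_pi_apply _)
    refine ⟨⋃ n, (fun p : (ℕ → ℕ) × Z => (r n p.1, p.2)) ⁻¹' D n, ?_, ?_⟩
    · exact MeasurableSet.iUnion (fun n =>
        (((hrm n).comp measurable_fst).prodMk measurable_snd) (hD n))
    · simp only [Set.preimage_iUnion]
      refine congrArg _ (funext fun n => ?_)
      rw [hED n]
      have : ∀ ω : Ω, r n (fun k => q (Nat.unpair k).1 ω (Nat.unpair k).2) = q n ω := by
        intro ω; funext j; simp [hr, Nat.unpair_pair]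
      ext p
      simp only [Set.mem_preimage, this p.1]

lemma good_of_measurable {E : Set (Ω × Z)} (hE : MeasurableSet E) : Good E := by
  classical
  let m' : MeasurableSpace (Ω × Z) :=
    { MeasurableSet' := Good
      measurableSet_empty := good_empty
      measurableSet_compl := fun _ h => good_compl h
      measurableSet_iUnion := fun _ h => good_iUnion h }
  have hle : (Prod.instMeasurableSpace : MeasurableSpace (Ω × Z)) ≤ m' := by
    rw [Prod.instMeasurableSpace]
    refine sup_le ?_ ?_
    · intro t ht
      rcases MeasurableSpace.measurableSet_comap.1 ht with ⟨A, hA, rfl⟩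
      show Good _
      refine ⟨fun ω _ => if ω ∈ A then 1 else 0,
        measurable_pi_lambda _ (fun _ => Measurable.ite hA measurable_const measurable_const),
        {p | p.1 0 = 1}, ?_, ?_⟩
      · exact ((measurable_pi_apply 0).comp measurable_fst) (measurableSet_singleton 1)
      · ext p
        by_cases hp : p.1 ∈ A <;> simp [hp]
    · intro t ht
      rcases MeasurableSpace.measurableSet_comap.1 ht with ⟨B, hB, rfl⟩
      exact ⟨fun _ _ => 0, measurable_const, Prod.snd ⁻¹' B, measurable_snd hB, rfl⟩
  exact hle E hE

/-- The measurable projection theorem, for complete (finite) measures. -/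
theorem measurableSet_exists_of_complete (ℙ : Measure Ω) [IsFiniteMeasure ℙ] [ℙ.IsComplete]
    [TopologicalSpace Z] [PolishSpace Z] [BorelSpace Z]
    {E : Set (Ω × Z)} (hE : MeasurableSet E) :
    MeasurableSet {ω : Ω | ∃ z : Z, (ω, z) ∈ E} := by
  obtain ⟨q, hq, D, hD, rfl⟩ := good_of_measurable hE
  have hproj : {ω : Ω | ∃ z : Z, (ω, z) ∈ (fun p : Ω × Z => (q p.1, p.2)) ⁻¹' D}
      = q ⁻¹' (Prod.fst '' D) := by
    ext ω
    simp only [Set.mem_setOf_eq, Set.mem_preimage, Set.mem_image, Prod.exists]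
    constructor
    · rintro ⟨z, hz⟩; exact ⟨q ω, z, hz, rfl⟩
    · rintro ⟨y, z, hyz, hy⟩; exact ⟨z, by rwa [← hy]⟩
  rw [hproj]
  have hAnal : AnalyticSet (Prod.fst '' D) :=
    (hD.analyticSet).image_of_continuous continuous_fst
  set ν : Measure (ℕ → ℕ) := ℙ.map q with hν
  haveI : IsFiniteMeasure ν := by
    refine ⟨?_⟩
    rw [hν, Measure.map_apply hq MeasurableSet.univ]
    exact measure_lt_top ℙ _
  obtain ⟨B, hBmeas, hae⟩ := analyticSet_nullMeasurableSet ν hAnal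
  rw [ae_eq_set] at hae
  have h1 : ℙ (q ⁻¹' (Prod.fst '' D) \ q ⁻¹' B) = 0 := by
    refine measure_mono_null (t := q ⁻¹' (Prod.fst '' D \ B)) (by rw [Set.preimage_diff]) ?_
    exact le_antisymm ((Measure.le_map_apply hq.aemeasurable _).trans_eq hae.1) zero_le
  have h2 : ℙ (q ⁻¹' B \ q ⁻¹' (Prod.fst '' D)) = 0 := by
    refine measure_mono_null (t := q ⁻¹' (B \ Prod.fst '' D)) (by rw [Set.preimage_diff]) ?_
    exact le_antisymm ((Measure.le_map_apply hq.aemeasurable _).trans_eq hae.2) zero_le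
  have : q ⁻¹' (Prod.fst '' D) =ᵐ[ℙ] q ⁻¹' B := ae_eq_set.2 ⟨h1, h2⟩
  exact NullMeasurableSet.measurable_of_complete ⟨q ⁻¹' B, hq hBmeas, this⟩

end Reduction

end SepProof

open MeasureTheory

/-- With `𝓕` complete with respect to `ℙ`, `X` Polish, `𝓔 ∈ 𝓕 ⊗ 𝓑` with nonempty compact
fibers `𝓔_ω`, and `φ_s` measurable and fiberwise continuous, the maximal cardinality
`Sep(ω,S,ε)` of an `(ω,S,ε)`-separated subset of `𝓔_ω` is measurable in `ω`. -/
theorem sep_count_measurable {Ω : Type*} [MeasurableSpace Ω]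
    (ℙ : Measure Ω) [IsProbabilityMeasure ℙ] [ℙ.IsComplete]
    {X : Type*} [MetricSpace X] [CompleteSpace X] [SecondCountableTopology X]
    [MeasurableSpace X] [BorelSpace X]
    (𝓔 : Set (Ω × X)) (h𝓔 : MeasurableSet 𝓔)
    (hne : ∀ ω : Ω, {x : X | (ω, x) ∈ 𝓔}.Nonempty)
    (hcpt : ∀ ω : Ω, IsCompact {x : X | (ω, x) ∈ 𝓔})
    {ι : Type*} [Fintype ι] [Nonempty ι]
    (φ : ι → Ω × X → X) (hφ : ∀ s, Measurable (φ s))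
    (hcont : ∀ (s : ι) (ω : Ω), ContinuousOn (fun x => φ s (ω, x)) {x : X | (ω, x) ∈ 𝓔})
    (ε : ℝ) (hε : 0 < ε) :
    Measurable (fun ω : Ω =>
      sSup {n : ℕ | ∃ E : Set X, E ⊆ {x : X | (ω, x) ∈ 𝓔} ∧ E.Finite ∧
        (∀ x ∈ E, ∀ y ∈ E, x ≠ y →
          ε < Finset.univ.sup' Finset.univ_nonempty
            (fun s => dist (φ s (ω, x)) (φ s (ω, y)))) ∧
        E.ncard = n}) := by
  classical
  set d' : Ω → X → X → ℝ := fun ω x y =>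
    Finset.univ.sup' Finset.univ_nonempty (fun s => dist (φ s (ω, x)) (φ s (ω, y))) with hd'
  set T : Ω → Set ℕ := fun ω => {n : ℕ | ∃ E : Set X, E ⊆ {x : X | (ω, x) ∈ 𝓔} ∧ E.Finite ∧
      (∀ x ∈ E, ∀ y ∈ E, x ≠ y → ε < d' ω x y) ∧ E.ncard = n} with hT
  show Measurable (fun ω : Ω => sSup (T ω))
  -- tuple characterization
  have htup : ∀ (ω : Ω) (n : ℕ), n ∈ T ω ↔ ∃ x : Fin n → X,
      (∀ i, (ω, x i) ∈ 𝓔) ∧ (∀ i j : Fin n, i ≠ j → ε < d' ω (x i) (x j)) := by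
    intro ω n
    constructor
    · rintro ⟨E, hEsub, hEfin, hEsep, hEcard⟩
      have hcard : hEfin.toFinset.card = n := by
        rw [← Set.ncard_eq_toFinset_card E hEfin]; exact hEcard
      let e := Finset.equivFinOfCardEq hcard
      refine ⟨fun i => (e.symm i : X), fun i => ?_, fun i j hij => ?_⟩
      · exact hEsub (hEfin.mem_toFinset.1 (e.symm i).2)
      · have hne' : ((e.symm i : X)) ≠ ((e.symm j : X)) := by
          intro hc
          exact hij (e.symm.injective (Subtype.coe_injective hc))
        exact hEsep _ (hEfin.mem_toFinset.1 (e.symm i).2) _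
          (hEfin.mem_toFinset.1 (e.symm j).2) hne'
    · rintro ⟨x, hxmem, hxsep⟩
      have hxinj : Function.Injective x := by
        intro i j hij
        by_contra hne'
        have := hxsep i j hne'
        rw [hij] at this
        have h0 : d' ω (x j) (x j) = 0 := by
          simp only [hd', dist_self]
          exact Finset.sup'_const _ _
        rw [h0] at this
        exact absurd this (not_lt.2 hε.le)
      refine ⟨Set.range x, ?_, Set.finite_range x, ?_, ?_⟩
      · rintro y ⟨i, rfl⟩; exact hxmem i
      · rintro y ⟨i, rfl⟩ z ⟨j, rfl⟩ hyz
        exact hxsep i j (fun h => hyz (congrArg x h))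
      · have : Set.range x = ↑(Finset.univ.image x) := by
          rw [Finset.coe_image, Finset.coe_univ, Set.image_univ]
        rw [this, Set.ncard_coe_finset, Finset.card_image_of_injective _ hxinj,
          Finset.card_univ, Fintype.card_fin]
  -- 0 is always in T ω
  have h0mem : ∀ ω, 0 ∈ T ω := by
    intro ω
    exact ⟨∅, Set.empty_subset _, Set.finite_empty, by simp, Set.ncard_empty X⟩
  -- downward closedness
  have hdc : ∀ ω (n k : ℕ), n ∈ T ω → k ≤ n → k ∈ T ω := by
    intro ω n k hn hkn
    rcases (htup ω n).1 hn with ⟨x, hxmem, hxsep⟩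
    refine (htup ω k).2 ⟨fun i => x (Fin.castLE hkn i), fun i => hxmem _, fun i j hij => ?_⟩
    refine hxsep _ _ (fun h => hij ?_)
    have hv := congrArg Fin.val h
    simp only [Fin.coe_castLE] at hv
    exact Fin.ext hv
  -- bounded above
  have hbdd : ∀ ω, BddAbove (T ω) := by
    intro ω
    set K : Set X := {x : X | (ω, x) ∈ 𝓔} with hK
    have hΦcont : ContinuousOn (fun x : X => (fun s : ι => φ s (ω, x))) K :=
      continuousOn_pi.2 (fun s => hcont s ω)
    have hKc : IsCompact ((fun x : X => (fun s : ι => φ s (ω, x))) '' K) :=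
      (hcpt ω).image_of_continuousOn hΦcont
    obtain ⟨t, htf, htsub⟩ := Metric.totallyBounded_iff.1 hKc.totallyBounded (ε/2)
      (by positivity)
    refine ⟨htf.toFinset.card, fun n hn => ?_⟩
    rcases (htup ω n).1 hn with ⟨x, hxmem, hxsep⟩
    have hball : ∀ i : Fin n, ∃ y ∈ t,
        (fun s : ι => φ s (ω, x i)) ∈ Metric.ball y (ε/2) := by
      intro i
      have : (fun s : ι => φ s (ω, x i)) ∈ (fun x : X => (fun s : ι => φ s (ω, x))) '' K :=
        ⟨x i, hxmem i, rfl⟩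
      simpa using htsub this
    choose y hyt hyball using hball
    have hyinj : Function.Injective y := by
      intro i j hij
      by_contra hne'
      have h1 : dist (fun s : ι => φ s (ω, x i)) (fun s : ι => φ s (ω, x j)) < ε := by
        calc dist (fun s : ι => φ s (ω, x i)) (fun s : ι => φ s (ω, x j))
            ≤ dist (fun s : ι => φ s (ω, x i)) (y i)
              + dist (fun s : ι => φ s (ω, x j)) (y i) := dist_triangle_right _ _ _
          _ < ε/2 + ε/2 := by
              refine add_lt_add (hyball i) ?_
              rw [hij]; exact hyball j
          _ = ε := by ring
      have h2 : d' ω (x i) (x j) ≤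
          dist (fun s : ι => φ s (ω, x i)) (fun s : ι => φ s (ω, x j)) := by
        refine Finset.sup'_le _ _ (fun s _ => ?_)
        exact dist_le_pi_dist (fun s : ι => φ s (ω, x i)) (fun s : ι => φ s (ω, x j)) s
      exact absurd ((hxsep i j hne').trans_le h2) (not_lt.2 h1.le)
    calc n = (Finset.univ : Finset (Fin n)).card := by
          rw [Finset.card_univ, Fintype.card_fin]
      _ ≤ htf.toFinset.card := by
          refine Finset.card_le_card_of_injOn y (fun i _ => htf.mem_toFinset.2 (hyt i))
            (fun i _ j _ h => hyinj h)
  -- the level sets are measurable, by the projection theorem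
  have hlevel : ∀ n : ℕ, MeasurableSet {ω : Ω | n ∈ T ω} := by
    intro n
    set B : Set (Ω × (Fin n → X)) := {p | (∀ i, (p.1, p.2 i) ∈ 𝓔) ∧
        ∀ i j : Fin n, i ≠ j → ε < d' p.1 (p.2 i) (p.2 j)} with hB
    have hBmeas : MeasurableSet B := by
      have hpart1 : MeasurableSet {p : Ω × (Fin n → X) | ∀ i, (p.1, p.2 i) ∈ 𝓔} := by
        rw [Set.setOf_forall]
        refine MeasurableSet.iInter (fun i => ?_)
        exact (measurable_fst.prodMk ((measurable_pi_apply i).comp measurable_snd)) h𝓔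
      have hpart2 : MeasurableSet {p : Ω × (Fin n → X) |
          ∀ i j : Fin n, i ≠ j → ε < d' p.1 (p.2 i) (p.2 j)} := by
        rw [Set.setOf_forall]
        refine MeasurableSet.iInter (fun i => ?_)
        rw [Set.setOf_forall]
        refine MeasurableSet.iInter (fun j => ?_)
        by_cases hij : i = j
        · simp only [hij, ne_eq, not_true_eq_false, false_implies, Set.setOf_true]
          exact MeasurableSet.univ
        · have : {p : Ω × (Fin n → X) | i ≠ j → ε < d' p.1 (p.2 i) (p.2 j)}
              = {p : Ω × (Fin n → X) | ε < d' p.1 (p.2 i) (p.2 j)} := by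
            ext p; simp [hij]
          rw [this]
          have hmeas : Measurable (fun p : Ω × (Fin n → X) => d' p.1 (p.2 i) (p.2 j)) := by
            have h1 : (fun p : Ω × (Fin n → X) => d' p.1 (p.2 i) (p.2 j))
                = Finset.univ.sup' Finset.univ_nonempty
                  (fun s (p : Ω × (Fin n → X)) =>
                    dist (φ s (p.1, p.2 i)) (φ s (p.1, p.2 j))) := by
              funext p
              simp only [hd', Finset.sup'_apply]
            rw [h1]
            refine Finset.measurable_sup' _ (fun s _ => ?_)
            exact Measurable.dist
              ((hφ s).comp (measurable_fst.prodMk ((measurable_pi_apply i).comp measurable_snd)))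
              ((hφ s).comp (measurable_fst.prodMk ((measurable_pi_apply j).comp measurable_snd)))
          exact measurableSet_lt measurable_const hmeas
      exact hpart1.inter hpart2
    have hproj : {ω : Ω | n ∈ T ω} = {ω : Ω | ∃ z : Fin n → X, (ω, z) ∈ B} := by
      ext ω
      rw [Set.mem_setOf_eq, htup ω n]
      constructor
      · rintro ⟨x, h1, h2⟩; exact ⟨x, h1, h2⟩
      · rintro ⟨x, h1, h2⟩; exact ⟨x, h1, h2⟩
    rw [hproj]
    exact SepProof.measurableSet_exists_of_complete ℙ hBmeas
  -- conclusion
  refine measurable_to_countable' (fun n => ?_)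
  have hpre : (fun ω : Ω => sSup (T ω)) ⁻¹' {n}
      = {ω : Ω | n ∈ T ω} ∩ ({ω : Ω | (n+1) ∈ T ω})ᶜ := by
    ext ω
    simp only [Set.mem_preimage, Set.mem_singleton_iff, Set.mem_inter_iff, Set.mem_compl_iff,
      Set.mem_setOf_eq]
    constructor
    · intro h
      have hmem : sSup (T ω) ∈ T ω := Nat.sSup_mem ⟨0, h0mem ω⟩ (hbdd ω)
      rw [h] at hmem
      refine ⟨hmem, fun hc => ?_⟩
      have := le_csSup (hbdd ω) hc
      omega
    · rintro ⟨h1, h2⟩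
      have hle : n ≤ sSup (T ω) := le_csSup (hbdd ω) h1
      have hmem : sSup (T ω) ∈ T ω := Nat.sSup_mem ⟨0, h0mem ω⟩ (hbdd ω)
      by_contra hne'
      have hlt : n + 1 ≤ sSup (T ω) := by omega
      exact h2 (hdc ω _ _ hmem hlt)
  rw [hpre]
  exact (hlevel n).inter (hlevel (n+1)).compl
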